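/- arXiv:0704.1553 — 2 statements merged into one kernel-verified Lean document; each statement's English description precedes it below -/
import Mathlib

section
/- Let B be an operator algebra with a *-admissible sequence of cones {C_n}. For x ∈ M_n(B), let x = x₁ + i x₂ with x₁, x₂ ∈ C_n − C_n be the unique such decomposition and set x^♯ = x₁ − i x₂; similarly write b^♯ for b ∈ B using C₁. Then for every A = (a_ij) ∈ M_n(B), the involution induced by C_n is computed entrywise: A^♯ = (a_ji^♯)_{i,j}, i.e., the (i,j) entry of A^♯ equals (a_ji)^♯. -/
open scoped ComplexOrder
open Matrix

noncomputable section

instance PiLp.instCompleteSpace' {p : ENNReal} {ι : Type*} {β : ι → Type*}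
    [∀ i, UniformSpace (β i)] [∀ i, CompleteSpace (β i)] : CompleteSpace (PiLp p β) :=
  (PiLp.uniformEquiv p β).completeSpace_iff.2 inferInstance

/-- The bounded operator on the Hilbert space `Hⁿ` (modeled as `PiLp 2`) associated with an
`n × n` matrix of bounded operators on `H`, via `(T v) i = ∑ j, T i j (v j)`. -/
def matCLM {H : Type*} [NormedAddCommGroup H] [InnerProductSpace ℂ H] {n : ℕ}
    (T : Matrix (Fin n) (Fin n) (H →L[ℂ] H)) :
    (PiLp 2 fun _ : Fin n => H) →L[ℂ] PiLp 2 fun _ : Fin n => H :=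
  ((PiLp.continuousLinearEquiv 2 ℂ fun _ : Fin n => H).symm.toContinuousLinearMap.comp
    (ContinuousLinearMap.pi fun i : Fin n =>
      ∑ j : Fin n, (T i j).comp (ContinuousLinearMap.proj j))).comp
    (PiLp.continuousLinearEquiv 2 ℂ fun _ : Fin n => H).toContinuousLinearMap

/-- The norm `‖·‖ₙ` on `Mₙ(B(H))`, i.e. the operator norm of the associated operator
on `B(Hⁿ)`. -/
def matNorm {H : Type*} [NormedAddCommGroup H] [InnerProductSpace ℂ H] {n : ℕ}
    (T : Matrix (Fin n) (Fin n) (H →L[ℂ] H)) : ℝ := ‖matCLM T‖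

/-- Positivity of a matrix of operators, i.e. positivity of the associated operator on `Hⁿ`. -/
def matPos {H : Type*} [NormedAddCommGroup H] [InnerProductSpace ℂ H] [CompleteSpace H] {n : ℕ}
    (T : Matrix (Fin n) (Fin n) (H →L[ℂ] H)) : Prop := (matCLM T).IsPositive

/-- The set of differences `S − S = {a − b : a, b ∈ S}` of a cone `S`. -/
def diffCone {α : Type*} [Sub α] (S : Set α) : Set α := {x | ∃ a ∈ S, ∃ b ∈ S, x = a - b}

/-- A sequence of cones `Cₙ ⊆ Mₙ(B)` is `*`-admissible (Definition 2.1 of the paper):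
`(0)` the cones consist of matrices with entries in `B`, are closed under addition and
multiplication by nonnegative reals, and are closed in the norm `‖·‖ₙ` of `B(Hⁿ)`;
`(1)` `e ∈ C₁`;
`(2i)` `Mₙ(B) = (Cₙ − Cₙ) + i(Cₙ − Cₙ)`; `(2ii)` `Cₙ ∩ (−Cₙ) = {0}`;
`(2iii)` `(Cₙ − Cₙ) ∩ i(Cₙ − Cₙ) = {0}`;
`(3i)` `x c x ∈ Cₙ` for `x ∈ Cₙ − Cₙ`, `c ∈ Cₙ`;
`(3ii)` `S* Cₙ S ⊆ Cₘ` for scalar matrices `S ∈ M_{n×m}(ℂ)`;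
`(4)` there is `r > 0` with `r‖x‖ eₙ + x ∈ Cₙ` for all `x ∈ Cₙ − Cₙ`;
`(5)` there is `K > 0` with `‖x‖ₙ ≤ K ‖x + i y‖ₙ` for all `x, y ∈ Cₙ − Cₙ`. -/
def IsStarAdmissible {H : Type*} [NormedAddCommGroup H] [InnerProductSpace ℂ H]
    [CompleteSpace H] (B : Subalgebra ℂ (H →L[ℂ] H))
    (C : ∀ n : ℕ, Set (Matrix (Fin n) (Fin n) (H →L[ℂ] H))) : Prop :=
  (∀ n, ∀ X ∈ C n, ∀ i j, X i j ∈ B) ∧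
  (∀ n, ∀ X ∈ C n, ∀ Y ∈ C n, X + Y ∈ C n) ∧
  (∀ n, ∀ X ∈ C n, ∀ r : ℝ, 0 ≤ r → (r : ℂ) • X ∈ C n) ∧
  (∀ (n : ℕ) (f : ℕ → Matrix (Fin n) (Fin n) (H →L[ℂ] H))
      (X : Matrix (Fin n) (Fin n) (H →L[ℂ] H)), (∀ k, f k ∈ C n) →
      Filter.Tendsto (fun k => matNorm (f k - X)) Filter.atTop (nhds 0) → X ∈ C n) ∧
  (1 : Matrix (Fin 1) (Fin 1) (H →L[ℂ] H)) ∈ C 1 ∧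
  (∀ (n : ℕ) (X : Matrix (Fin n) (Fin n) (H →L[ℂ] H)), (∀ i j, X i j ∈ B) →
      ∃ x ∈ diffCone (C n), ∃ y ∈ diffCone (C n), X = x + Complex.I • y) ∧
  (∀ n, ∀ X ∈ C n, -X ∈ C n → X = 0) ∧
  (∀ n, ∀ x ∈ diffCone (C n), ∀ y ∈ diffCone (C n), x = Complex.I • y → x = 0) ∧
  (∀ n, ∀ x ∈ diffCone (C n), ∀ c ∈ C n, x * c * x ∈ C n) ∧
  (∀ (n m : ℕ) (S : Matrix (Fin n) (Fin m) ℂ), ∀ X ∈ C n,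
      Sᴴ.map (algebraMap ℂ (H →L[ℂ] H)) * X * S.map (algebraMap ℂ (H →L[ℂ] H)) ∈ C m) ∧
  (∃ r : ℝ, 0 < r ∧ ∀ n, ∀ x ∈ diffCone (C n),
      ((r * matNorm x : ℝ) : ℂ) • (1 : Matrix (Fin n) (Fin n) (H →L[ℂ] H)) + x ∈ C n) ∧
  (∃ K : ℝ, 0 < K ∧ ∀ n, ∀ x ∈ diffCone (C n), ∀ y ∈ diffCone (C n),
      matNorm x ≤ K * matNorm (x + Complex.I • y))


section Stmt5Aux

lemma diffCone_neg' {α : Type*} [AddCommGroup α] {S : Set α} {x : α}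
    (hx : x ∈ diffCone S) : -x ∈ diffCone S := by
  obtain ⟨a, ha, b, hb, rfl⟩ := hx
  exact ⟨b, hb, a, ha, (neg_sub a b)⟩

lemma diffCone_add' {α : Type*} [AddCommGroup α] {S : Set α}
    (hS : ∀ a ∈ S, ∀ b ∈ S, a + b ∈ S) {x y : α}
    (hx : x ∈ diffCone S) (hy : y ∈ diffCone S) : x + y ∈ diffCone S := by
  obtain ⟨a, ha, b, hb, rfl⟩ := hx
  obtain ⟨c, hc, d, hd, rfl⟩ := hy
  exact ⟨a + c, hS _ ha _ hc, b + d, hS _ hb _ hd, by abel⟩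

lemma diffCone_sub' {α : Type*} [AddCommGroup α] {S : Set α}
    (hS : ∀ a ∈ S, ∀ b ∈ S, a + b ∈ S) {x y : α}
    (hx : x ∈ diffCone S) (hy : y ∈ diffCone S) : x - y ∈ diffCone S := by
  rw [sub_eq_add_neg]
  exact diffCone_add' hS hx (diffCone_neg' hy)

lemma diffCone_smul' {α : Type*} [AddCommGroup α] [Module ℂ α] {S : Set α}
    (hS : ∀ X ∈ S, ∀ r : ℝ, 0 ≤ r → (r : ℂ) • X ∈ S) {x : α} (r : ℝ) (hr : 0 ≤ r)
    (hx : x ∈ diffCone S) : (r : ℂ) • x ∈ diffCone S := by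
  obtain ⟨a, ha, b, hb, rfl⟩ := hx
  exact ⟨_, hS _ ha r hr, _, hS _ hb r hr, smul_sub _ _ _⟩

/-- Uniqueness of the decomposition `x = x₁ + i x₂` with `x₁, x₂ ∈ Cₙ − Cₙ`. -/
lemma diffCone_decomp_unique {α : Type*} [AddCommGroup α] [Module ℂ α] {S : Set α}
    (hadd : ∀ a ∈ S, ∀ b ∈ S, a + b ∈ S)
    (h2iii : ∀ x ∈ diffCone S, ∀ y ∈ diffCone S, x = Complex.I • y → x = 0)
    {u v u' v' : α} (hu : u ∈ diffCone S) (hv : v ∈ diffCone S)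
    (hu' : u' ∈ diffCone S) (hv' : v' ∈ diffCone S)
    (h : u + Complex.I • v = u' + Complex.I • v') : u = u' ∧ v = v' := by
  have h1 : u - u' = Complex.I • (v' - v) := by
    rw [smul_sub, sub_eq_sub_iff_add_eq_add, h, add_comm]
  have h0 := h2iii _ (diffCone_sub' hadd hu hu') _ (diffCone_sub' hadd hv' hv) h1
  have hu0 : u = u' := sub_eq_zero.mp h0
  have hv0 : v = v' := by
    have h2 : Complex.I • v = Complex.I • v' := by
      have := h
      rw [hu0] at this
      exact add_left_cancel this
    exact smul_right_injective _ Complex.I_ne_zero h2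
  exact ⟨hu0, hv0⟩

lemma stmt5_coeff1 {n : ℕ} (i j k l : Fin n) :
    letI s : ℂ → Fin n → ℂ := fun lam m =>
      (if m = i then (1 : ℂ) else 0) + lam * (if m = j then 1 else 0)
    (1 / 4 : ℂ) * ((starRingEnd ℂ) (s 1 k) * s 1 l - (starRingEnd ℂ) (s (-1) k) * s (-1) l)
      + Complex.I * ((1 / 4 : ℂ) * ((starRingEnd ℂ) (s (-Complex.I) k) * s (-Complex.I) l
          - (starRingEnd ℂ) (s Complex.I k) * s Complex.I l))
      = if k = i ∧ l = j then 1 else 0 := by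
  by_cases hki : k = i <;> by_cases hkj : k = j <;> by_cases hli : l = i <;>
    by_cases hlj : l = j <;>
    simp_all [Complex.conj_I, Complex.ext_iff] <;> ring_nf

lemma stmt5_coeff2 {n : ℕ} (i j k l : Fin n) :
    letI s : ℂ → Fin n → ℂ := fun lam m =>
      (if m = i then (1 : ℂ) else 0) + lam * (if m = j then 1 else 0)
    (1 / 4 : ℂ) * ((starRingEnd ℂ) (s 1 k) * s 1 l - (starRingEnd ℂ) (s (-1) k) * s (-1) l)
      - Complex.I * ((1 / 4 : ℂ) * ((starRingEnd ℂ) (s (-Complex.I) k) * s (-Complex.I) l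
          - (starRingEnd ℂ) (s Complex.I k) * s Complex.I l))
      = if k = j ∧ l = i then 1 else 0 := by
  by_cases hki : k = i <;> by_cases hkj : k = j <;> by_cases hli : l = i <;>
    by_cases hlj : l = j <;>
    simp_all [Complex.conj_I, Complex.ext_iff] <;> ring_nf

lemma stmt5_comp_entry {H : Type*} [NormedAddCommGroup H] [InnerProductSpace ℂ H] {n : ℕ}
    (s : Fin n → ℂ) (X : Matrix (Fin n) (Fin n) (H →L[ℂ] H)) :
    (((Matrix.of fun k (_ : Fin 1) => s k)ᴴ.map (algebraMap ℂ (H →L[ℂ] H)) * X *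
        (Matrix.of fun k (_ : Fin 1) => s k).map (algebraMap ℂ (H →L[ℂ] H))) 0 0)
      = ∑ k, ∑ l, ((starRingEnd ℂ) (s k) * s l) • X k l := by
  simp only [Matrix.mul_apply, Matrix.map_apply, Matrix.conjTranspose_apply, Matrix.of_apply,
    Finset.sum_mul, Algebra.algebraMap_eq_smul_one, smul_mul_assoc, mul_smul_comm, one_mul,
    mul_one, smul_smul, RCLike.star_def, Finset.smul_sum]
  rw [Finset.sum_comm]
  refine Finset.sum_congr rfl fun k _ => Finset.sum_congr rfl fun l _ => ?_
  rw [mul_comm]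

lemma stmt5_merge {H : Type*} [NormedAddCommGroup H] [InnerProductSpace ℂ H] {n : ℕ}
    (X : Matrix (Fin n) (Fin n) (H →L[ℂ] H)) (c₁ c₂ c₃ c₄ : Fin n → Fin n → ℂ) :
    (1 / 4 : ℂ) • ((∑ k, ∑ l, c₁ k l • X k l) - ∑ k, ∑ l, c₂ k l • X k l)
      + Complex.I • ((1 / 4 : ℂ) • ((∑ k, ∑ l, c₃ k l • X k l) - ∑ k, ∑ l, c₄ k l • X k l))
      = ∑ k, ∑ l, ((1 / 4 : ℂ) * (c₁ k l - c₂ k l)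
          + Complex.I * ((1 / 4 : ℂ) * (c₃ k l - c₄ k l))) • X k l := by
  simp only [add_smul, sub_smul, mul_smul, smul_sub, smul_add, Finset.sum_add_distrib,
    Finset.sum_sub_distrib, Finset.smul_sum]

lemma stmt5_merge2 {H : Type*} [NormedAddCommGroup H] [InnerProductSpace ℂ H] {n : ℕ}
    (X : Matrix (Fin n) (Fin n) (H →L[ℂ] H)) (c₁ c₂ c₃ c₄ : Fin n → Fin n → ℂ) :
    (1 / 4 : ℂ) • ((∑ k, ∑ l, c₁ k l • X k l) - ∑ k, ∑ l, c₂ k l • X k l)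
      - Complex.I • ((1 / 4 : ℂ) • ((∑ k, ∑ l, c₃ k l • X k l) - ∑ k, ∑ l, c₄ k l • X k l))
      = ∑ k, ∑ l, ((1 / 4 : ℂ) * (c₁ k l - c₂ k l)
          - Complex.I * ((1 / 4 : ℂ) * (c₃ k l - c₄ k l))) • X k l := by
  simp only [add_smul, sub_smul, mul_smul, smul_sub, smul_add, Finset.sum_add_distrib,
    Finset.sum_sub_distrib, Finset.smul_sum]

/-- Entrywise decomposition: each entry of an element of `Cₙ − Cₙ` decomposes as
`X i j = p + i q`, `X j i = p − i q` with `p, q ∈ C₁ − C₁`. -/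
lemma stmt5_entry_decomp {H : Type*} [NormedAddCommGroup H] [InnerProductSpace ℂ H] {n : ℕ}
    {C : ∀ n : ℕ, Set (Matrix (Fin n) (Fin n) (H →L[ℂ] H))}
    (hadd : ∀ m, ∀ X ∈ C m, ∀ Y ∈ C m, X + Y ∈ C m)
    (hsmul : ∀ m, ∀ X ∈ C m, ∀ r : ℝ, 0 ≤ r → (r : ℂ) • X ∈ C m)
    (h3ii : ∀ (n m : ℕ) (S : Matrix (Fin n) (Fin m) ℂ), ∀ X ∈ C n,
      Sᴴ.map (algebraMap ℂ (H →L[ℂ] H)) * X * S.map (algebraMap ℂ (H →L[ℂ] H)) ∈ C m)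
    {X : Matrix (Fin n) (Fin n) (H →L[ℂ] H)} (hX : X ∈ diffCone (C n)) (i j : Fin n) :
    ∃ p ∈ diffCone (C 1), ∃ q ∈ diffCone (C 1),
      (Matrix.of fun _ _ : Fin 1 => X i j) = p + Complex.I • q ∧
      (Matrix.of fun _ _ : Fin 1 => X j i) = p - Complex.I • q := by
  set s : ℂ → Fin n → ℂ := fun lam m =>
    (if m = i then (1 : ℂ) else 0) + lam * (if m = j then 1 else 0) with hs
  set G : ℂ → Matrix (Fin 1) (Fin 1) (H →L[ℂ] H) := fun lam =>
    (Matrix.of fun k (_ : Fin 1) => s lam k)ᴴ.map (algebraMap ℂ (H →L[ℂ] H)) * X *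
      (Matrix.of fun k (_ : Fin 1) => s lam k).map (algebraMap ℂ (H →L[ℂ] H)) with hG
  have hGmem : ∀ lam, G lam ∈ diffCone (C 1) := by
    intro lam
    obtain ⟨a, ha, b, hb, rfl⟩ := hX
    exact ⟨_, h3ii n 1 (Matrix.of fun k (_ : Fin 1) => s lam k) a ha,
      _, h3ii n 1 (Matrix.of fun k (_ : Fin 1) => s lam k) b hb, by
      simp [hG, Matrix.mul_sub, Matrix.sub_mul]⟩
  have hGentry : ∀ lam, G lam 0 0 = ∑ k, ∑ l, ((starRingEnd ℂ) (s lam k) * s lam l) • X k l :=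
    fun lam => stmt5_comp_entry (s lam) X
  have hhalf : (0:ℝ) ≤ 1/4 := by norm_num
  have hq : ((1/4:ℝ):ℂ) = (1/4 : ℂ) := by norm_num
  refine ⟨((1/4:ℝ):ℂ) • (G 1 - G (-1)),
    diffCone_smul' (hsmul 1) _ hhalf (diffCone_sub' (hadd 1) (hGmem 1) (hGmem (-1))),
    ((1/4:ℝ):ℂ) • (G (-Complex.I) - G Complex.I),
    diffCone_smul' (hsmul 1) _ hhalf
      (diffCone_sub' (hadd 1) (hGmem (-Complex.I)) (hGmem Complex.I)), ?_, ?_⟩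
  · ext a b
    simp only [Matrix.add_apply, Matrix.smul_apply, Matrix.sub_apply, Matrix.of_apply]
    have ha : a = 0 := Subsingleton.elim a 0
    have hb : b = 0 := Subsingleton.elim b 0
    subst ha; subst hb
    rw [hq, hGentry, hGentry, hGentry, hGentry, stmt5_merge]
    have := fun k l => stmt5_coeff1 i j k l
    simp only [hs] at this ⊢
    rw [Finset.sum_congr rfl fun k _ => Finset.sum_congr rfl fun l _ => by rw [this k l]]
    simp [ite_and, Finset.sum_ite_eq']
  · ext a b
    simp only [Matrix.sub_apply, Matrix.smul_apply, Matrix.of_apply]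
    have ha : a = 0 := Subsingleton.elim a 0
    have hb : b = 0 := Subsingleton.elim b 0
    subst ha; subst hb
    rw [hq, hGentry, hGentry, hGentry, hGentry, stmt5_merge2]
    have := fun k l => stmt5_coeff2 i j k l
    simp only [hs] at this ⊢
    rw [Finset.sum_congr rfl fun k _ => Finset.sum_congr rfl fun l _ => by rw [this k l]]
    simp [ite_and, Finset.sum_ite_eq']

end Stmt5Aux

/-- For a `*`-admissible sequence of cones on an operator algebra `B`, the
involution `x = x₁ + i x₂ ↦ x^♯ = x₁ − i x₂` on `Mₙ(B)` is computed entrywise from the involution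
on `B`: `(A^♯)_{ij} = (a_{ji})^♯`. -/
theorem stmt5 {H : Type*} [NormedAddCommGroup H] [InnerProductSpace ℂ H] [CompleteSpace H]
    (B : Subalgebra ℂ (H →L[ℂ] H)) (hBclosed : IsClosed (B : Set (H →L[ℂ] H)))
    (C : ∀ n : ℕ, Set (Matrix (Fin n) (Fin n) (H →L[ℂ] H)))
    (hC : IsStarAdmissible B C) {n : ℕ}
    (A X₁ X₂ U V : Matrix (Fin n) (Fin n) (H →L[ℂ] H))
    -- `A = X₁ + i X₂` is a decomposition of `A` in `Mₙ(B)` with `X₁, X₂ ∈ Cₙ − Cₙ`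
    (hX₁ : X₁ ∈ diffCone (C n)) (hX₂ : X₂ ∈ diffCone (C n))
    (hA : A = X₁ + Complex.I • X₂)
    -- while the entries of `U, V` give decompositions `a_{ij} = u_{ij} + i v_{ij}` in `B`,
    -- with `u_{ij}, v_{ij} ∈ C₁ − C₁` (viewed as `1 × 1` matrices)
    (hU : ∀ i j, (Matrix.of fun _ _ : Fin 1 => U i j) ∈ diffCone (C 1))
    (hV : ∀ i j, (Matrix.of fun _ _ : Fin 1 => V i j) ∈ diffCone (C 1))
    (hUV : A = U + Complex.I • V) :
    -- then `A^♯ = X₁ − i X₂` is the transpose of the matrix of entrywise involutions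
    X₁ - Complex.I • X₂ = (U - Complex.I • V)ᵀ := by
  obtain ⟨hB0, hadd, hsmul, hcl, h1, h2i, h2ii, h2iii, h3i, h3ii, h4, h5⟩ := hC
  refine Matrix.ext fun i j => ?_
  obtain ⟨p₁, hp₁, q₁, hq₁, hd₁, hd₁'⟩ := stmt5_entry_decomp hadd hsmul h3ii hX₁ i j
  obtain ⟨p₂, hp₂, q₂, hq₂, hd₂, hd₂'⟩ := stmt5_entry_decomp hadd hsmul h3ii hX₂ i j
  have hAij : (Matrix.of fun _ _ : Fin 1 => A i j) = (p₁ - q₂) + Complex.I • (q₁ + p₂) := by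
    have h : (Matrix.of fun _ _ : Fin 1 => A i j)
        = (Matrix.of fun _ _ : Fin 1 => X₁ i j)
          + Complex.I • (Matrix.of fun _ _ : Fin 1 => X₂ i j) := by
      ext a b; simp [hA]
    rw [h, hd₁, hd₂]
    simp only [smul_add, smul_sub, smul_smul, Complex.I_mul_I, neg_one_smul]
    abel
  have hAij' : (Matrix.of fun _ _ : Fin 1 => A i j)
      = (Matrix.of fun _ _ : Fin 1 => U i j)
        + Complex.I • (Matrix.of fun _ _ : Fin 1 => V i j) := by
    ext a b; simp [hUV]
  have hAji : (Matrix.of fun _ _ : Fin 1 => A j i) = (p₁ + q₂) + Complex.I • (p₂ - q₁) := by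
    have h : (Matrix.of fun _ _ : Fin 1 => A j i)
        = (Matrix.of fun _ _ : Fin 1 => X₁ j i)
          + Complex.I • (Matrix.of fun _ _ : Fin 1 => X₂ j i) := by
      ext a b; simp [hA]
    rw [h, hd₁', hd₂']
    simp only [smul_add, smul_sub, smul_smul, Complex.I_mul_I, neg_one_smul]
    abel
  have hAji' : (Matrix.of fun _ _ : Fin 1 => A j i)
      = (Matrix.of fun _ _ : Fin 1 => U j i)
        + Complex.I • (Matrix.of fun _ _ : Fin 1 => V j i) := by
    ext a b; simp [hUV]
  obtain ⟨hU2, hV2⟩ := diffCone_decomp_unique (hadd 1) (h2iii 1)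
    (diffCone_add' (hadd 1) hp₁ hq₂) (diffCone_sub' (hadd 1) hp₂ hq₁)
    (hU j i) (hV j i) (hAji.symm.trans hAji')
  have e₁ := congrFun (congrFun hd₁ 0) 0
  have e₂ := congrFun (congrFun hd₂ 0) 0
  have eU := congrFun (congrFun hU2 0) 0
  have eV := congrFun (congrFun hV2 0) 0
  simp only [Matrix.of_apply, Matrix.add_apply, Matrix.sub_apply, Matrix.smul_apply]
    at e₁ e₂ eU eV
  simp only [Matrix.sub_apply, Matrix.smul_apply, Matrix.transpose_apply]
  rw [e₁, e₂, ← eU, ← eV]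
  simp only [smul_add, smul_sub, smul_smul, Complex.I_mul_I, neg_one_smul]
  abel
end
end

section
/- Let B be an operator algebra with a *-admissible sequence of cones {C_n}. Then for every n, every c ∈ C_n and every x₁, x₂ ∈ C_n − C_n, one has (x₁ − i x₂) c (x₁ + i x₂) ∈ C_n. -/
open scoped ComplexOrder
open Matrix

noncomputable section

section Stmt6Aux

lemma stmt6_map_fromRows {m₁ m₂ nn α β : Type*} (f : α → β)
    (A : Matrix m₁ nn α) (B : Matrix m₂ nn α) :
    (fromRows A B).map f = fromRows (A.map f) (B.map f) := by
  ext (i | i) j <;> simp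

lemma stmt6_map_fromColumns {m n₁ n₂ α β : Type*} (f : α → β)
    (A : Matrix m n₁ α) (B : Matrix m n₂ α) :
    (fromCols A B).map f = fromCols (A.map f) (B.map f) := by
  ext i (j | j) <;> simp

lemma stmt6_map_smul_one {H : Type*} [NormedAddCommGroup H] [InnerProductSpace ℂ H]
    {n : ℕ} (z : ℂ) :
    ((z • (1 : Matrix (Fin n) (Fin n) ℂ)).map (algebraMap ℂ (H →L[ℂ] H)))
      = z • (1 : Matrix (Fin n) (Fin n) (H →L[ℂ] H)) := by
  ext i j
  simp only [Matrix.map_apply, Matrix.smul_apply, Matrix.one_apply]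
  split_ifs <;> simp [Algebra.algebraMap_eq_smul_one]

lemma stmt6_map_one {H : Type*} [NormedAddCommGroup H] [InnerProductSpace ℂ H]
    {m : Type*} [DecidableEq m] :
    ((1 : Matrix m m ℂ).map (algebraMap ℂ (H →L[ℂ] H))) = 1 :=
  Matrix.map_one _ (map_zero _) (map_one _)

lemma stmt6_submul_left {l m o p α : Type*} [Fintype m] [NonUnitalNonAssocSemiring α]
    (A : Matrix l m α) (B : Matrix m o α) (e : p → l) :
    A.submatrix e id * B = (A * B).submatrix e id := by
  ext i j; simp [Matrix.mul_apply]

lemma stmt6_submul_right {l m o p α : Type*} [Fintype m] [NonUnitalNonAssocSemiring α]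
    (A : Matrix l m α) (B : Matrix m o α) (e : p → o) :
    A * B.submatrix id e = (A * B).submatrix id e := by
  ext i j; simp [Matrix.mul_apply]

end Stmt6Aux

/-- For a `*`-admissible sequence of cones on an operator algebra `B`:
for every `c ∈ Cₙ` and `x₁, x₂ ∈ Cₙ − Cₙ`, one has `(x₁ − i x₂) c (x₁ + i x₂) ∈ Cₙ`. -/
theorem stmt6 {H : Type*} [NormedAddCommGroup H] [InnerProductSpace ℂ H] [CompleteSpace H]
    (B : Subalgebra ℂ (H →L[ℂ] H)) (hBclosed : IsClosed (B : Set (H →L[ℂ] H)))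
    (C : ∀ n : ℕ, Set (Matrix (Fin n) (Fin n) (H →L[ℂ] H)))
    (hC : IsStarAdmissible B C) {n : ℕ}
    (c : Matrix (Fin n) (Fin n) (H →L[ℂ] H)) (hc : c ∈ C n)
    (x₁ x₂ : Matrix (Fin n) (Fin n) (H →L[ℂ] H))
    (hx₁ : x₁ ∈ diffCone (C n)) (hx₂ : x₂ ∈ diffCone (C n)) :
    (x₁ - Complex.I • x₂) * c * (x₁ + Complex.I • x₂) ∈ C n := by
  obtain ⟨hB, hadd, hsmul, hcl, hone, hdec, h2ii, h2iii, h3i, h3ii, h4, h5⟩ := hC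
  have Opdef : True := trivial
  set r : Fin n ⊕ Fin n ≃ Fin (n + n) := finSumFinEquiv with hr
  -- the sandwich identity for rectangular scalar matrices S : n × (n+n)
  have key1 : ∀ (S : Matrix (Fin n) (Fin n ⊕ Fin n) ℂ) (M : Matrix (Fin n) (Fin n) (H →L[ℂ] H)),
      ((S.submatrix id ⇑r.symm)ᴴ).map (algebraMap ℂ (H →L[ℂ] H)) * M * ((S.submatrix id ⇑r.symm)).map (algebraMap ℂ (H →L[ℂ] H))
        = (Sᴴ.map (algebraMap ℂ (H →L[ℂ] H)) * M * S.map (algebraMap ℂ (H →L[ℂ] H))).submatrix ⇑r.symm ⇑r.symm := by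
    intro S M
    ext i j
    simp [Matrix.mul_apply]
  -- block diagonal matrices with entries in C n land in C (n+n)
  have blkmem : ∀ M ∈ C n, ∀ N ∈ C n,
      (fromBlocks M 0 0 N).submatrix ⇑r.symm ⇑r.symm ∈ C (n + n) := by
    intro M hM N hN
    have h1 := h3ii n (n + n) ((fromCols 1 0).submatrix id ⇑r.symm) M hM
    have h2 := h3ii n (n + n) ((fromCols 0 1).submatrix id ⇑r.symm) N hN
    have hsum := hadd _ _ h1 _ h2
    have e1 : ((fromCols 1 0 : Matrix (Fin n) (Fin n ⊕ Fin n) ℂ))ᴴ.map (algebraMap ℂ (H →L[ℂ] H)) * M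
        * ((fromCols 1 0 : Matrix (Fin n) (Fin n ⊕ Fin n) ℂ)).map (algebraMap ℂ (H →L[ℂ] H)) = fromBlocks M 0 0 0 := by
      rw [conjTranspose_fromCols_eq_fromRows_conjTranspose, stmt6_map_fromRows,
        stmt6_map_fromColumns]
      simp [stmt6_map_one, Matrix.fromRows_mul, Matrix.mul_fromCols]
      ext (i | i) (j | j) <;> simp
    have e2 : ((fromCols 0 1 : Matrix (Fin n) (Fin n ⊕ Fin n) ℂ))ᴴ.map (algebraMap ℂ (H →L[ℂ] H)) * N
        * ((fromCols 0 1 : Matrix (Fin n) (Fin n ⊕ Fin n) ℂ)).map (algebraMap ℂ (H →L[ℂ] H)) = fromBlocks 0 0 0 N := by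
      rw [conjTranspose_fromCols_eq_fromRows_conjTranspose, stmt6_map_fromRows,
        stmt6_map_fromColumns]
      simp [stmt6_map_one, Matrix.fromRows_mul, Matrix.mul_fromCols]
      ext (i | i) (j | j) <;> simp
    rw [key1, key1, e1, e2] at hsum
    convert hsum using 1
    ext i j
    rcases hi : r.symm i with k | k <;> rcases hj : r.symm j with l | l <;>
      simp [hi, hj]
  -- the block diagonal of x₁, x₂ is in the difference cone
  obtain ⟨a₁, ha₁, b₁, hb₁, hx₁eq⟩ := hx₁
  obtain ⟨a₂, ha₂, b₂, hb₂, hx₂eq⟩ := hx₂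
  have hXdiff : (fromBlocks x₁ 0 0 x₂).submatrix ⇑r.symm ⇑r.symm ∈ diffCone (C (n + n)) := by
    refine ⟨_, blkmem a₁ ha₁ a₂ ha₂, _, blkmem b₁ hb₁ b₂ hb₂, ?_⟩
    rw [hx₁eq, hx₂eq]
    ext i j
    rcases hi : r.symm i with k | k <;> rcases hj : r.symm j with l | l <;>
      simp [hi, hj]
  -- the "all c" matrix is in C (n+n)
  have hE := h3ii n (n + n) ((fromCols 1 1).submatrix id ⇑r.symm) c hc
  -- apply (3i)
  have hZ := h3i (n + n) _ hXdiff _ hE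
  -- compress with the scalar column [1; i]
  have hW := h3ii (n + n) n ((fromRows 1 (Complex.I • 1)).submatrix ⇑r.symm id) _ hZ
  -- now identify the result
  have key2 : ∀ (U : Matrix (Fin n ⊕ Fin n) (Fin n) ℂ)
      (Z : Matrix (Fin n ⊕ Fin n) (Fin n ⊕ Fin n) (H →L[ℂ] H)),
      ((U.submatrix ⇑r.symm id)ᴴ).map (algebraMap ℂ (H →L[ℂ] H)) * Z.submatrix ⇑r.symm ⇑r.symm
        * (U.submatrix ⇑r.symm id).map (algebraMap ℂ (H →L[ℂ] H)) = Uᴴ.map (algebraMap ℂ (H →L[ℂ] H)) * Z * U.map (algebraMap ℂ (H →L[ℂ] H)) := by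
    intro U Z
    rw [conjTranspose_submatrix, ← submatrix_map, ← submatrix_map]
    rw [show (Uᴴ.map (algebraMap ℂ (H →L[ℂ] H))).submatrix id ⇑r.symm * Z.submatrix ⇑r.symm ⇑r.symm
        = (Uᴴ.map (algebraMap ℂ (H →L[ℂ] H)) * Z).submatrix id ⇑r.symm from
      (Matrix.submatrix_mul _ _ id r.symm ⇑r.symm r.symm.bijective).symm]
    rw [show (Uᴴ.map (algebraMap ℂ (H →L[ℂ] H)) * Z).submatrix id ⇑r.symm * (U.map (algebraMap ℂ (H →L[ℂ] H))).submatrix ⇑r.symm id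
        = (Uᴴ.map (algebraMap ℂ (H →L[ℂ] H)) * Z * U.map (algebraMap ℂ (H →L[ℂ] H))).submatrix id id from
      (Matrix.submatrix_mul _ _ id r.symm id r.symm.bijective).symm]
    simp
  rw [key1] at hW
  rw [show (fromBlocks x₁ 0 0 x₂).submatrix ⇑r.symm ⇑r.symm
        * ((fromCols 1 1 : Matrix (Fin n) (Fin n ⊕ Fin n) ℂ)ᴴ.map (algebraMap ℂ (H →L[ℂ] H)) * c
            * (fromCols 1 1 : Matrix (Fin n) (Fin n ⊕ Fin n) ℂ).map (algebraMap ℂ (H →L[ℂ] H))).submatrix ⇑r.symm ⇑r.symm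
        * (fromBlocks x₁ 0 0 x₂).submatrix ⇑r.symm ⇑r.symm
      = (fromBlocks x₁ 0 0 x₂
          * ((fromCols 1 1 : Matrix (Fin n) (Fin n ⊕ Fin n) ℂ)ᴴ.map (algebraMap ℂ (H →L[ℂ] H)) * c
              * (fromCols 1 1 : Matrix (Fin n) (Fin n ⊕ Fin n) ℂ).map (algebraMap ℂ (H →L[ℂ] H)))
          * fromBlocks x₁ 0 0 x₂).submatrix ⇑r.symm ⇑r.symm from by
    rw [Matrix.submatrix_mul_equiv, Matrix.submatrix_mul_equiv]] at hW
  rw [key2] at hW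
  convert hW using 1
  -- finally, a pure sum-type matrix computation
  rw [conjTranspose_fromCols_eq_fromRows_conjTranspose,
    conjTranspose_fromRows_eq_fromCols_conjTranspose,
    stmt6_map_fromRows, stmt6_map_fromColumns, stmt6_map_fromRows, stmt6_map_fromColumns]
  have hIstar : ((Complex.I • (1 : Matrix (Fin n) (Fin n) ℂ))ᴴ) =
      (-Complex.I) • (1 : Matrix (Fin n) (Fin n) ℂ) := by
    ext i j
    simp [Matrix.conjTranspose_apply, Matrix.one_apply, Matrix.smul_apply, eq_comm]
    split_ifs <;> simp [Complex.conj_I]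
  simp only [hIstar, Matrix.conjTranspose_one, stmt6_map_smul_one, stmt6_map_one]
  simp only [← Matrix.mul_assoc]
  simp only [Matrix.fromCols_mul_fromBlocks, Matrix.fromCols_mul_fromRows,
    Matrix.mul_fromCols, Matrix.fromRows_mul, Matrix.smul_mul, Matrix.mul_smul,
    Matrix.one_mul, Matrix.mul_one, Matrix.mul_zero, Matrix.zero_mul, add_zero, zero_add,
    mul_one, one_mul]
  simp only [mul_add, add_mul, sub_mul, mul_sub, Matrix.add_mul, Matrix.mul_add,
    Matrix.sub_mul, Matrix.mul_sub, Matrix.smul_mul, Matrix.mul_smul,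
    smul_smul, Complex.I_mul_I, neg_smul, neg_one_smul, smul_add, smul_sub, sub_eq_add_neg,
    neg_add, neg_neg]
end
end
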